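/- For each fixed τ ∈ (1/e, 1], the function ϖ_τ is well-defined (the two defining pieces agree at the endpoints), continuous, nonnegative, Λ(τ)-periodic, and vanishes exactly at the integer multiples of Λ(τ); moreover there exist measurable functions p, τ̄ : ℝ → ℝ with |p(t)| = 1 for all t, τ̄(t) ≤ t for all t, sup_t (t - τ̄(t)) = τ, and τ̄(t) → ∞ as t → ∞, such that ϖ_τ(t) = ϖ_τ(0) + ∫_0^t p(s)·ϖ_τ(τ̄(s)) ds for all t ∈ ℝ. In particular ϖ_τ is a Λ(τ)-oscillating, Λ(τ)-periodic solution of the delay equation x'(t) = p(t)·x(τ̄(t)). -/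

import Mathlib

open Real MeasureTheory Filter Set

noncomputable section

/-- `x` is the solution of `x'(t) = -x(t-τ)` with `x ≡ 1` on `(-∞,0]`:
`x(t) = 1 - ∫_0^t x(s-τ) ds` for `t ≥ 0`. -/
def IsXSol (τ : ℝ) (x : ℝ → ℝ) : Prop :=
  Continuous x ∧ (∀ t ≤ (0:ℝ), x t = 1) ∧
    ∀ t ≥ (0:ℝ), x t = 1 - ∫ s in (0:ℝ)..t, x (s - τ)

/-- The first positive root of a function. -/
noncomputable def firstRoot (x : ℝ → ℝ) : ℝ := sInf {t : ℝ | 0 < t ∧ x t = 0}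

/-- `ψ` is the solution of `ψ'(t) = max{x_τ(ϱ(τ)+t-τ), ψ(t)}` on `[0,τ]`,
`ψ'(t) = ψ(t)` on `[τ,∞)`, `ψ(0) = 0`. -/
def IsPsiSol (τ ρ : ℝ) (xτ ψ : ℝ → ℝ) : Prop :=
  ContinuousOn ψ (Ici (0:ℝ)) ∧ ψ 0 = 0 ∧
    (∀ t ∈ Icc (0:ℝ) τ, ψ t = ∫ s in (0:ℝ)..t, max (xτ (ρ + s - τ)) (ψ s)) ∧
    (∀ t ≥ τ, ψ t = ψ τ + ∫ s in τ..t, ψ s)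

/-- A (continuous, integrated-form) solution of the delay equation
`x'(t) = p(t) x(τ̄(t))` on `[t₀,∞)`. -/
def IsDelaySolution (p τd : ℝ → ℝ) (t₀ : ℝ) (x : ℝ → ℝ) : Prop :=
  Continuous x ∧ ∀ t ≥ t₀, x t = x t₀ + ∫ s in t₀..t, p s * x (τd s)

/-- `x` is `α`-oscillating: eventually every interval on which `x` has no zero
has length at most `α`. -/
def AlphaOscillating (α : ℝ) (x : ℝ → ℝ) : Prop :=
  ∃ T : ℝ, ∀ a b : ℝ, T ≤ a → a < b → (∀ t ∈ Ioo a b, x t ≠ 0) → b - a ≤ α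

/-- `x` is oscillatory: it has arbitrarily large zeros. -/
def Oscillatory (x : ℝ → ℝ) : Prop := ∀ T : ℝ, ∃ t ≥ T, x t = 0




/-- Pasting continuity on two closed sets. -/
lemma contOn_union_closed {f : ℝ → ℝ} {s t : Set ℝ} (hs : IsClosed s) (ht : IsClosed t)
    (hfs : ContinuousOn f s) (hft : ContinuousOn f t) : ContinuousOn f (s ∪ t) := by
  intro x hx
  have Hs : ContinuousWithinAt f s x := by
    by_cases h : x ∈ s
    · exact hfs x h
    · exact continuousWithinAt_of_notMem_closure (by rwa [hs.closure_eq])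
  have Ht : ContinuousWithinAt f t x := by
    by_cases h : x ∈ t
    · exact hft x h
    · exact continuousWithinAt_of_notMem_closure (by rwa [ht.closure_eq])
  exact Hs.union Ht

/-- A periodic function continuous on one (closed) period is continuous. -/
lemma periodic_continuous {f : ℝ → ℝ} {c : ℝ} (hc : 0 < c) (hper : Function.Periodic f c)
    (h : ContinuousOn f (Icc 0 c)) : Continuous f := by
  have hk : ∀ k : ℤ, ContinuousOn f (Icc (k * c) (k * c + c)) := by
    intro k
    have : EqOn f ((fun s => f s) ∘ fun s => s - k * c) (Icc (k * c) (k * c + c)) := by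
      intro s _
      simp only [Function.comp_apply]
      exact (hper.sub_int_mul_eq k).symm
    refine ContinuousOn.congr ?_ this
    refine h.comp (by fun_prop) ?_
    intro s hs
    constructor
    · simp [sub_nonneg, hs.1]
    · have := hs.2; simp only [mem_Icc]; linarith [hs.1, hs.2]
  have hk2 : ∀ k : ℤ, ContinuousOn f (Icc (k * c) (k * c + 2 * c)) := by
    intro k
    have hu : Icc ((k:ℝ) * c) (k * c + c) ∪ Icc (k * c + c) (k * c + 2 * c)
        = Icc ((k:ℝ) * c) (k * c + 2 * c) := by
      apply Icc_union_Icc_eq_Icc <;> linarith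
    have h2 : ContinuousOn f (Icc ((k:ℝ) * c + c) (k * c + 2 * c)) := by
      have := hk (k + 1)
      have e : ((k:ℤ) + 1 : ℤ) * c = (k:ℝ) * c + c := by push_cast; ring
      rw [e] at this
      convert this using 2
      ring
    rw [← hu]
    exact contOn_union_closed isClosed_Icc isClosed_Icc (hk k) h2
  rw [continuous_iff_continuousAt]
  intro t
  set k : ℤ := ⌊t / c⌋ with hkdef
  have h1 : (k : ℝ) * c ≤ t := by
    have := (le_div_iff₀ hc).mp (Int.floor_le (t / c))
    linarith
  have h2 : t < (k : ℝ) * c + c := by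
    have := Int.lt_floor_add_one (t / c)
    have := (div_lt_iff₀ hc).mp this
    linarith
  have hmem : Icc ((k - 1 : ℤ) * c) ((k - 1 : ℤ) * c + 2 * c) ∈ nhds t := by
    apply Icc_mem_nhds
    · push_cast; nlinarith
    · push_cast; nlinarith
  exact (hk2 (k - 1)).continuousAt hmem

/-- Solutions of `g' = g` in integral form are exponentials. -/
lemma expSol {g : ℝ → ℝ} (hg : Continuous g) {a : ℝ}
    (heq : ∀ t ≥ a, g t = g a + ∫ s in a..t, g s) :
    ∀ b ≥ a, g b = g a * Real.exp (b - a) := by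
  intro b hb
  set F : ℝ → ℝ := fun t => (g a + ∫ s in a..t, g s) * Real.exp (a - t) with hF
  have hI : ∀ y : ℝ, HasDerivAt (fun t => ∫ s in a..t, g s) (g y) y := by
    intro y
    exact intervalIntegral.integral_hasDerivAt_right (hg.intervalIntegrable _ _)
      (hg.stronglyMeasurableAtFilter _ _) hg.continuousAt
  have hE : ∀ y : ℝ, HasDerivAt (fun t => Real.exp (a - t)) (-Real.exp (a - y)) y := by
    intro y
    have h1 : HasDerivAt (fun t : ℝ => a - t) (-1) y := by
      simpa using (hasDerivAt_id y).const_sub a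
    simpa using h1.exp
  have hFd : ∀ y : ℝ, HasDerivAt F
      (g y * Real.exp (a - y) + (g a + ∫ s in a..y, g s) * (-Real.exp (a - y))) y := by
    intro y
    exact (((hI y).const_add (g a)).mul (hE y))
  have hzero : ∀ y ∈ Ico a b, HasDerivWithinAt F 0 (Ici y) y := by
    intro y hy
    have h0 := hFd y
    have : g y * Real.exp (a - y) + (g a + ∫ s in a..y, g s) * (-Real.exp (a - y)) = 0 := by
      rw [← heq y hy.1]; ring
    rw [this] at h0
    exact h0.hasDerivWithinAt
  have hFc : ContinuousOn F (Icc a b) :=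
    (fun y _ => ((hFd y).differentiableAt.continuousAt).continuousWithinAt)
  have := constant_of_has_deriv_right_zero hFc hzero b (right_mem_Icc.mpr hb)
  have hFb : (g a + ∫ s in a..b, g s) * Real.exp (a - b) = g a := by
    have hFa : F a = g a := by simp [hF]
    rw [hF] at this
    simp only at this
    rw [this]
    simp
  have h2 := heq b hb
  rw [← h2] at hFb
  have hx : Real.exp (a - b) * Real.exp (b - a) = 1 := by
    rw [← Real.exp_add]; ring_nf; exact Real.exp_zero
  calc g b = g b * (Real.exp (a - b) * Real.exp (b - a)) := by rw [hx]; ring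
    _ = (g b * Real.exp (a - b)) * Real.exp (b - a) := by ring
    _ = g a * Real.exp (b - a) := by rw [hFb]

/-- interval integral congruence ignoring the right endpoint. -/
lemma intCongrIco {f g : ℝ → ℝ} {a b : ℝ} (hab : a ≤ b) (h : ∀ s ∈ Ico a b, f s = g s) :
    ∫ s in a..b, f s = ∫ s in a..b, g s := by
  apply intervalIntegral.integral_congr_ae
  have hne : ∀ᵐ s : ℝ, s ≠ b := by
    rw [ae_iff]
    have : {s : ℝ | ¬s ≠ b} = {b} := by ext s; simp
    rw [this]; exact measure_singleton b
  filter_upwards [hne] with s hs hmem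
  rw [uIoc_of_le hab] at hmem
  exact h s ⟨le_of_lt hmem.1, lt_of_le_of_ne hmem.2 hs⟩

theorem stmt12 (τ : ℝ) (hτ : τ ∈ Ioc (1 / Real.exp 1) 1)
    (xτ : ℝ → ℝ) (hx : IsXSol τ xτ) (ρ : ℝ) (hρ : ρ = firstRoot xτ)
    (ψ : ℝ → ℝ) (hψ : IsPsiSol τ ρ xτ ψ)
    (Λτ : ℝ) (hΛ : ρ < Λτ ∧ ψ (Λτ - ρ) = 1)
    (ϖ : ℝ → ℝ) (hper : Function.Periodic ϖ Λτ)
    (hϖ1 : ∀ t ∈ Icc (0:ℝ) (Λτ - ρ), ϖ t = ψ t)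
    (hϖ2 : ∀ t ∈ Icc (Λτ - ρ) Λτ, ϖ t = xτ (t - (Λτ - ρ))) :
    ψ (Λτ - ρ) = xτ 0 ∧ xτ ρ = ψ 0 ∧
    Continuous ϖ ∧
    (∀ t, 0 ≤ ϖ t) ∧
    (∀ t, ϖ t = 0 ↔ ∃ n : ℤ, t = n * Λτ) ∧
    (∃ p τd : ℝ → ℝ, Measurable p ∧ Measurable τd ∧
      (∀ t, |p t| = 1) ∧ (∀ t, τd t ≤ t) ∧
      IsLUB {y : ℝ | ∃ t : ℝ, y = t - τd t} τ ∧
      Filter.Tendsto τd Filter.atTop Filter.atTop ∧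
      ∀ t : ℝ, ϖ t = ϖ 0 + ∫ s in (0:ℝ)..t, p s * ϖ (τd s)) ∧
    AlphaOscillating Λτ ϖ := by
  obtain ⟨hτ1, hτ2⟩ := hτ
  obtain ⟨hxc, hx0, hxeq⟩ := hx
  obtain ⟨hψcont, hψ0, hψ3, hψ4⟩ := hψ
  obtain ⟨hρΛ, hψΛ⟩ := hΛ
  have hτpos : 0 < τ := lt_trans (by positivity) hτ1
  have hρ0 : 0 ≤ ρ := by
    rw [hρ]
    exact Real.sInf_nonneg (fun w hw => hw.1.le)
  have hσ0 : (0:ℝ) ≤ Λτ - ρ := by linarith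
  have hϖ0 : ϖ 0 = 0 := by rw [hϖ1 0 ⟨le_refl 0, hσ0⟩, hψ0]
  have hϖΛ : ϖ Λτ = 0 := by
    have := hper 0
    rw [zero_add] at this
    rw [this, hϖ0]
  have hxρ : xτ ρ = 0 := by
    have h2 := hϖ2 Λτ ⟨by linarith, le_refl _⟩
    have : Λτ - (Λτ - ρ) = ρ := by ring
    rw [this] at h2
    rw [← h2, hϖΛ]
  have hρpos : 0 < ρ := by
    rcases lt_or_eq_of_le hρ0 with h | h
    · exact h
    · exfalso
      have := hx0 0 (le_refl 0)
      rw [← h] at hxρ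
      rw [hxρ] at this
      norm_num at this
  have hlb : ∀ w ∈ {t : ℝ | 0 < t ∧ xτ t = 0}, ρ ≤ w := by
    intro w hw
    rw [hρ]
    exact csInf_le ⟨0, fun z hz => hz.1.le⟩ hw
  -- x is integrable things
  have hxint : ∀ a b : ℝ, IntervalIntegrable (fun s => xτ (s - τ)) volume a b :=
    fun a b => (hxc.comp (continuous_id.sub continuous_const)).intervalIntegrable a b
  have hxdiff : ∀ a b : ℝ, 0 ≤ a → 0 ≤ b →
      xτ b = xτ a - ∫ s in a..b, xτ (s - τ) := by
    intro a b ha hb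
    rw [hxeq a ha, hxeq b hb]
    rw [← intervalIntegral.integral_add_adjacent_intervals (hxint 0 a) (hxint a b)]
    ring
  have hx1 : ∀ t ∈ Icc (0:ℝ) τ, xτ t = 1 - t := by
    intro t ht
    rw [hxeq t ht.1]
    have : ∫ s in (0:ℝ)..t, xτ (s - τ) = ∫ s in (0:ℝ)..t, (1:ℝ) := by
      apply intervalIntegral.integral_congr
      intro s hs
      rw [uIcc_of_le ht.1] at hs
      exact hx0 _ (by linarith [hs.1, hs.2, ht.2])
    rw [this]
    simp
  have hτρ : τ ≤ ρ := by
    rw [hρ]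
    unfold firstRoot
    refine le_csInf ?_ ?_
    · exact ⟨ρ, ⟨hρpos, hxρ⟩⟩
    intro w hw
    by_contra hlt
    push_neg at hlt
    have hw0 : 0 < w := hw.1
    have := hx1 w ⟨hw0.le, hlt.le⟩
    rw [hw.2] at this
    have : w = 1 := by linarith
    linarith
  have hxpos : ∀ w, w < ρ → 0 < xτ w := by
    intro w hw
    rcases le_or_gt w 0 with h | h
    · rw [hx0 w h]; norm_num
    · by_contra hle
      push_neg at hle
      have hcont : ContinuousOn xτ (Icc 0 w) := hxc.continuousOn
      have h01 : (0:ℝ) ∈ Icc (xτ w) (xτ 0) := by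
        rw [hx0 0 (le_refl 0)]
        exact ⟨hle, by norm_num⟩
      obtain ⟨c, hc, hc0⟩ := intermediate_value_Icc' h.le hcont h01
      have hcpos : 0 < c := by
        rcases lt_or_eq_of_le hc.1 with h' | h'
        · exact h'
        · exfalso; rw [← h', hx0 0 (le_refl 0)] at hc0; norm_num at hc0
      have := hlb c ⟨hcpos, hc0⟩
      linarith [hc.2]
  have hxnonneg : ∀ w, w ≤ ρ → 0 ≤ xτ w := by
    intro w hw
    rcases lt_or_eq_of_le hw with h | h
    · exact (hxpos w h).le
    · rw [h, hxρ]
  have hxle1 : ∀ w, w ≤ ρ → xτ w ≤ 1 := by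
    intro w hw
    rcases le_or_gt w 0 with h | h
    · rw [hx0 w h]
    · have := hxdiff 0 w (le_refl 0) h.le
      rw [hx0 0 (le_refl 0)] at this
      rw [this]
      have : 0 ≤ ∫ s in (0:ℝ)..w, xτ (s - τ) := by
        apply intervalIntegral.integral_nonneg h.le
        intro u hu
        exact hxnonneg _ (by linarith [hu.2, hτpos])
      linarith
  -- Ψ: global continuous version of ψ
  set Ψ : ℝ → ℝ := fun t => ψ (max t 0) with hΨdef
  have hΨc : Continuous Ψ := by
    apply hψcont.comp_continuous (continuous_id.max continuous_const)
    intro x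
    exact le_max_right x 0
  have hΨeq : ∀ t, 0 ≤ t → Ψ t = ψ t := by
    intro t ht
    simp only [hΨdef, max_eq_left ht]
  set maxf : ℝ → ℝ := fun s => max (xτ (ρ + s - τ)) (Ψ s) with hmaxdef
  have hmc : Continuous maxf := by
    apply Continuous.max _ hΨc
    exact hxc.comp ((continuous_const.add continuous_id).sub continuous_const)
  have hψ3' : ∀ t ∈ Icc (0:ℝ) τ, ψ t = ∫ s in (0:ℝ)..t, maxf s := by
    intro t ht
    rw [hψ3 t ht]
    apply intervalIntegral.integral_congr
    intro s hs
    rw [uIcc_of_le ht.1] at hs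
    simp only [hmaxdef]
    rw [hΨeq s hs.1]
  have hψ4' : ∀ t, t ≥ τ → Ψ t = Ψ τ + ∫ s in τ..t, Ψ s := by
    intro t ht
    rw [hΨeq t (by linarith), hΨeq τ hτpos.le, hψ4 t ht]
    congr 1
    apply intervalIntegral.integral_congr
    intro s hs
    rw [uIcc_of_le ht] at hs
    exact (hΨeq s (by linarith [hs.1])).symm
  have hψexp : ∀ b, b ≥ τ → ψ b = ψ τ * Real.exp (b - τ) := by
    intro b hb
    have := expSol hΨc hψ4' b hb
    rw [hΨeq b (by linarith), hΨeq τ hτpos.le] at this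
    exact this
  have hψmono : ∀ s t : ℝ, 0 ≤ s → s ≤ t → t ≤ τ → ψ s ≤ ψ t := by
    intro s t hs hst htτ
    rw [hψ3' s ⟨hs, by linarith⟩, hψ3' t ⟨by linarith, htτ⟩]
    rw [← intervalIntegral.integral_add_adjacent_intervals
      (hmc.intervalIntegrable 0 s) (hmc.intervalIntegrable s t)]
    have : 0 ≤ ∫ u in s..t, maxf u := by
      apply intervalIntegral.integral_nonneg hst
      intro u hu
      exact le_trans (hxnonneg _ (by linarith [hu.2])) (le_max_left _ _)
    linarith
  have hψτ1 : ∀ s ∈ Icc (0:ℝ) τ, 0 ≤ ψ s := by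
    intro s hs
    have := hψmono 0 s (le_refl 0) hs.1 hs.2
    rw [hψ0] at this
    exact this
  have hτσ : τ ≤ Λτ - ρ := by
    by_contra hlt
    push_neg at hlt
    have hσint : ψ (Λτ - ρ) = ∫ s in (0:ℝ)..(Λτ - ρ), maxf s := hψ3' _ ⟨hσ0, hlt.le⟩
    have hb : ∫ s in (0:ℝ)..(Λτ - ρ), maxf s ≤ ∫ s in (0:ℝ)..(Λτ - ρ), (1:ℝ) := by
      apply intervalIntegral.integral_mono_on hσ0 (hmc.intervalIntegrable _ _)
        (intervalIntegrable_const)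
      intro u hu
      apply max_le
      · exact hxle1 _ (by linarith [hu.2])
      · rw [hΨeq u hu.1]
        calc ψ u ≤ ψ (Λτ - ρ) := hψmono u (Λτ - ρ) hu.1 hu.2 hlt.le
          _ = 1 := hψΛ
    rw [hψΛ] at hσint
    simp at hb
    rw [← hσint] at hb
    linarith
  have hψτpos : 0 < ψ τ := by
    rw [hψ3' τ ⟨hτpos.le, le_refl τ⟩]
    apply intervalIntegral.intervalIntegral_pos_of_pos_on (hmc.intervalIntegrable 0 τ) _ hτpos
    intro u hu
    calc (0:ℝ) < xτ (ρ + u - τ) := hxpos _ (by linarith [hu.2])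
      _ ≤ maxf u := le_max_left _ _
  have hψpos : ∀ u : ℝ, 0 < u → u ≤ Λτ - ρ → 0 < ψ u := by
    intro u hu huσ
    rcases le_or_gt u τ with h | h
    · rw [hψ3' u ⟨hu.le, h⟩]
      apply intervalIntegral.intervalIntegral_pos_of_pos_on (hmc.intervalIntegrable 0 u) _ hu
      intro v hv
      calc (0:ℝ) < xτ (ρ + v - τ) := hxpos _ (by linarith [hv.2])
        _ ≤ maxf v := le_max_left _ _
    · rw [hψexp u h.le]
      positivity
  have hψnonneg : ∀ u : ℝ, 0 ≤ u → u ≤ Λτ - ρ → 0 ≤ ψ u := by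
    intro u hu huσ
    rcases lt_or_eq_of_le hu with h | h
    · exact (hψpos u h huσ).le
    · rw [← h, hψ0]
  -- continuity of ϖ
  have hΛpos : 0 < Λτ := by linarith
  have hϖcont : Continuous ϖ := by
    apply periodic_continuous hΛpos hper
    have hu : Icc (0:ℝ) (Λτ - ρ) ∪ Icc (Λτ - ρ) Λτ = Icc (0:ℝ) Λτ :=
      Icc_union_Icc_eq_Icc hσ0 (by linarith)
    rw [← hu]
    apply contOn_union_closed isClosed_Icc isClosed_Icc
    · apply ContinuousOn.congr (hΨc.continuousOn (s := Icc (0:ℝ) (Λτ - ρ)))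
      intro t ht
      rw [hϖ1 t ht, hΨeq t ht.1]
    · apply ContinuousOn.congr
        ((hxc.comp (continuous_id.sub continuous_const)).continuousOn
          (s := Icc (Λτ - ρ) Λτ))
      intro t ht
      exact hϖ2 t ht
  -- global nonnegativity / positivity of ϖ
  have hΛne : Λτ ≠ 0 := ne_of_gt hΛpos
  set nfl : ℝ → ℝ := fun t => (⌊t / Λτ⌋ : ℝ) * Λτ with hnfldef
  set rr : ℝ → ℝ := fun t => t - nfl t with hrrdef
  have hrr0 : ∀ t, 0 ≤ rr t := by
    intro t
    have h1 := (le_div_iff₀ hΛpos).mp (Int.floor_le (t / Λτ))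
    simp only [hrrdef, hnfldef]
    linarith
  have hrrL : ∀ t, rr t < Λτ := by
    intro t
    have h1 := (div_lt_iff₀ hΛpos).mp (Int.lt_floor_add_one (t / Λτ))
    simp only [hrrdef, hnfldef]
    push_cast at h1 ⊢
    linarith
  have hϖrr : ∀ t, ϖ (rr t) = ϖ t := by
    intro t
    simp only [hrrdef, hnfldef]
    exact hper.sub_int_mul_eq ⌊t / Λτ⌋
  have hfloor_add : ∀ t : ℝ, (⌊(t + Λτ) / Λτ⌋ : ℤ) = ⌊t / Λτ⌋ + 1 := by
    intro t
    rw [add_div, div_self hΛne, Int.floor_add_one]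
  have hnfl_add : ∀ t, nfl (t + Λτ) = nfl t + Λτ := by
    intro t
    simp only [hnfldef, hfloor_add t]
    push_cast
    ring
  have hrr_add : ∀ t, rr (t + Λτ) = rr t := by
    intro t
    simp only [hrrdef, hnfl_add t]
    ring
  have hrr_id : ∀ t, 0 ≤ t → t < Λτ → rr t = t ∧ nfl t = 0 := by
    intro t h0 hL
    have hf : ⌊t / Λτ⌋ = 0 := by
      rw [Int.floor_eq_zero_iff]
      constructor
      · positivity
      · rw [div_lt_one hΛpos]; exact hL
    constructor
    · simp only [hrrdef, hnfldef, hf]; push_cast; ring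
    · simp only [hnfldef, hf]; push_cast; ring
  have hϖpos : ∀ u : ℝ, 0 < u → u < Λτ → 0 < ϖ u := by
    intro u h0 hL
    rcases le_or_gt u (Λτ - ρ) with h | h
    · rw [hϖ1 u ⟨h0.le, h⟩]
      exact hψpos u h0 h
    · rw [hϖ2 u ⟨h.le, hL.le⟩]
      exact hxpos _ (by linarith)
  have hϖnonneg : ∀ t, 0 ≤ ϖ t := by
    intro t
    rw [← hϖrr t]
    rcases eq_or_lt_of_le (hrr0 t) with h | h
    · rw [← h, hϖ0]
    · exact (hϖpos _ h (hrrL t)).le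
  -- the delay equation data
  classical
  set p : ℝ → ℝ := fun t => if rr t < Λτ - ρ then 1 else -1 with hpdef
  set τd : ℝ → ℝ := fun t =>
      if rr t < τ then (if ϖ t ≤ ϖ (t - τ) then t - τ else t)
      else if rr t < Λτ - ρ then t
      else if rr t < Λτ - ρ + τ then nfl t + (Λτ - ρ)
      else t - τ with hτddef
  set q : ℝ → ℝ := fun t => p t * ϖ (τd t) with hqdef
  have mnfl : Measurable nfl := by
    apply Measurable.mul_const
    exact (Measurable.of_discrete (f := fun n : ℤ => (n : ℝ))).comp ((measurable_id.div_const Λτ).floor)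
  have mrr : Measurable rr := measurable_id.sub mnfl
  have mp : Measurable p := by
    apply Measurable.ite _ measurable_const measurable_const
    exact measurableSet_lt mrr measurable_const
  have mτd : Measurable τd := by
    apply Measurable.ite (measurableSet_lt mrr measurable_const)
    · apply Measurable.ite _ (measurable_id.sub_const τ) measurable_id
      exact measurableSet_le hϖcont.measurable (hϖcont.measurable.comp (measurable_id.sub_const τ))
    apply Measurable.ite (measurableSet_lt mrr measurable_const) measurable_id
    exact Measurable.ite (measurableSet_lt mrr measurable_const) (mnfl.add_const _)
      (measurable_id.sub_const τ)
  have mq : Measurable q := by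
    apply mp.mul
    exact hϖcont.measurable.comp mτd
  have hp_abs : ∀ t, |p t| = 1 := by
    intro t
    simp only [hpdef]
    by_cases h : rr t < Λτ - ρ <;> simp [h]
  have hτd_le : ∀ t, τd t ≤ t := by
    intro t
    simp only [hτddef]
    by_cases h1 : rr t < τ
    · by_cases h2 : ϖ t ≤ ϖ (t - τ) <;> simp [h1, h2] <;> linarith
    · by_cases h2 : rr t < Λτ - ρ
      · simp [h1, h2]
      · by_cases h3 : rr t < Λτ - ρ + τ
        · simp only [h1, h2, h3, if_false, if_true]
          push_neg at h2
          simp only [hrrdef] at h2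
          linarith
        · simp [h1, h2, h3]
          linarith
  have hτd_ge : ∀ t, t - τ ≤ τd t := by
    intro t
    simp only [hτddef]
    by_cases h1 : rr t < τ
    · by_cases h2 : ϖ t ≤ ϖ (t - τ) <;> simp [h1, h2] <;> linarith
    · by_cases h2 : rr t < Λτ - ρ
      · simp [h1, h2]; linarith
      · by_cases h3 : rr t < Λτ - ρ + τ
        · simp only [h1, h2, h3, if_false, if_true]
          simp only [hrrdef] at h3
          linarith
        · simp [h1, h2, h3]
  have hτd0 : τd 0 = -τ := by
    obtain ⟨hr0, _⟩ := hrr_id 0 (le_refl 0) hΛpos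
    simp only [hτddef]
    rw [if_pos (by rw [hr0]; exact hτpos), if_pos (by rw [hϖ0]; exact hϖnonneg _)]
    ring
  have hlub : IsLUB {y : ℝ | ∃ t : ℝ, y = t - τd t} τ := by
    constructor
    · rintro y ⟨t, hy⟩
      rw [hy]
      linarith [hτd_ge t]
    · intro b hb
      apply hb
      exact ⟨0, by rw [hτd0]; ring⟩
  have htend : Filter.Tendsto τd Filter.atTop Filter.atTop := by
    apply tendsto_atTop_mono hτd_ge
    simpa [sub_eq_add_neg] using tendsto_atTop_add_const_right atTop (-τ) tendsto_id
  -- periodicity of q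
  have hτd_add : ∀ t, τd (t + Λτ) = τd t + Λτ := by
    intro t
    have hcond : (ϖ (t + Λτ) ≤ ϖ (t + Λτ - τ)) ↔ (ϖ t ≤ ϖ (t - τ)) := by
      rw [hper t]
      have e : t + Λτ - τ = (t - τ) + Λτ := by ring
      rw [e, hper (t - τ)]
    simp only [hτddef, hrr_add t, hnfl_add t]
    by_cases h1 : rr t < τ
    · rw [if_pos h1, if_pos h1]
      by_cases h2 : ϖ t ≤ ϖ (t - τ)
      · rw [if_pos (hcond.mpr h2), if_pos h2]
        ring
      · rw [if_neg (fun hh => h2 (hcond.mp hh)), if_neg h2]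
    · rw [if_neg h1, if_neg h1]
      by_cases h2 : rr t < Λτ - ρ
      · rw [if_pos h2, if_pos h2]
      · rw [if_neg h2, if_neg h2]
        by_cases h3 : rr t < Λτ - ρ + τ
        · rw [if_pos h3, if_pos h3]
          ring
        · rw [if_neg h3, if_neg h3]
          ring
  have hq_per : Function.Periodic q Λτ := by
    intro t
    simp only [hqdef, hpdef, hrr_add t, hτd_add t, hper (τd t)]
  -- integrability of q
  obtain ⟨C, hC⟩ := (isCompact_Icc (a := (0:ℝ)) (b := Λτ)).exists_bound_of_continuousOn
    hϖcont.continuousOn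
  have hϖbd : ∀ t, |ϖ t| ≤ C := by
    intro t
    rw [← hϖrr t]
    have := hC (rr t) ⟨hrr0 t, (hrrL t).le⟩
    simpa [Real.norm_eq_abs] using this
  have hqbd : ∀ t, |q t| ≤ C := by
    intro t
    have h1 : |q t| = |p t| * |ϖ (τd t)| := by
      simp only [hqdef, abs_mul]
    rw [h1, hp_abs t, one_mul]
    exact hϖbd _
  have qInt : ∀ a b : ℝ, IntervalIntegrable q volume a b := by
    intro a b
    rw [intervalIntegrable_iff]
    apply Measure.integrableOn_of_bounded
    · exact (measure_Ioc_lt_top).ne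
    · exact mq.aestronglyMeasurable
    · exact ae_of_all _ (fun x => hqbd x)
  -- explicit values of q on one period
  have hE1 : ∀ t, 0 ≤ t → t < τ → q t = maxf t := by
    intro t h0 ht
    obtain ⟨hrt, hnt⟩ := hrr_id t h0 (by linarith [hτσ, hρpos])
    have hϖt : ϖ t = Ψ t := by
      rw [hϖ1 t ⟨h0, by linarith [hτσ]⟩, hΨeq t h0]
    have hϖtτ : ϖ (t - τ) = xτ (ρ + t - τ) := by
      have hmem : t - τ + Λτ ∈ Icc (Λτ - ρ) Λτ := ⟨by linarith [hτρ], by linarith⟩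
      have h2 := hϖ2 _ hmem
      have h3 : ϖ (t - τ) = ϖ (t - τ + Λτ) := (hper (t - τ)).symm
      rw [h3, h2]
      congr 1
      ring
    simp only [hqdef, hτddef, hpdef, hrt]
    rw [if_pos ht, if_pos (by linarith [hτσ] : t < Λτ - ρ), one_mul]
    by_cases h2 : ϖ t ≤ ϖ (t - τ)
    · rw [if_pos h2, hϖtτ]
      simp only [hmaxdef]
      rw [max_eq_left]
      rw [← hϖt, ← hϖtτ]
      exact h2
    · push_neg at h2
      rw [if_neg (not_le.mpr h2), hϖt]
      simp only [hmaxdef]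
      rw [max_eq_right]
      rw [← hϖt, ← hϖtτ]
      exact h2.le
  have hE2 : ∀ t, τ ≤ t → t < Λτ - ρ → q t = Ψ t := by
    intro t h0 ht
    obtain ⟨hrt, hnt⟩ := hrr_id t (by linarith [hτpos]) (by linarith [hρ0])
    simp only [hqdef, hτddef, hpdef, hrt]
    rw [if_neg (not_lt.mpr h0), if_pos ht, if_pos ht, one_mul]
    rw [hϖ1 t ⟨by linarith [hτpos], ht.le⟩, hΨeq t (by linarith [hτpos])]
  have hE3 : ∀ t, Λτ - ρ ≤ t → t < Λτ - ρ + τ → q t = -1 := by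
    intro t h0 ht
    obtain ⟨hrt, hnt⟩ := hrr_id t (by linarith [hσ0]) (by linarith [hτρ])
    simp only [hqdef, hτddef, hpdef, hrt, hnt]
    rw [if_neg (not_lt.mpr h0), if_neg (not_lt.mpr (le_trans hτσ h0)), if_neg (not_lt.mpr h0),
      if_pos ht]
    rw [zero_add, hϖ1 (Λτ - ρ) ⟨hσ0, le_refl _⟩, hψΛ]
    ring
  have hE4 : ∀ t, Λτ - ρ + τ ≤ t → t < Λτ → q t = -xτ (t - τ - (Λτ - ρ)) := by
    intro t h0 ht
    obtain ⟨hrt, hnt⟩ := hrr_id t (by linarith [hσ0, hτpos]) ht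
    simp only [hqdef, hτddef, hpdef, hrt]
    rw [if_neg (not_lt.mpr (by linarith [hτpos] : Λτ - ρ ≤ t))]
    rw [if_neg (not_lt.mpr (by linarith [hσ0] : τ ≤ t))]
    rw [if_neg (not_lt.mpr (by linarith [hτpos] : Λτ - ρ ≤ t))]
    rw [if_neg (not_lt.mpr h0)]
    rw [hϖ2 (t - τ) ⟨by linarith, by linarith [hτpos]⟩]
    ring
  -- the integral identity on one period
  have hϖτint : ∀ t ∈ Icc (0:ℝ) τ, ∫ s in (0:ℝ)..t, q s = ϖ t := by
    intro t ht
    rw [intCongrIco ht.1 (fun s hs => hE1 s hs.1 (lt_of_lt_of_le hs.2 ht.2))]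
    rw [← hψ3' t ht, hϖ1 t ⟨ht.1, le_trans ht.2 hτσ⟩]
  have hint2 : ∀ t ∈ Icc τ (Λτ - ρ), ∫ s in (0:ℝ)..t, q s = ϖ t := by
    intro t ht
    rw [← intervalIntegral.integral_add_adjacent_intervals (qInt 0 τ) (qInt τ t)]
    rw [hϖτint τ ⟨hτpos.le, le_refl τ⟩]
    rw [intCongrIco ht.1 (fun s hs => hE2 s hs.1 (lt_of_lt_of_le hs.2 ht.2))]
    rw [hϖ1 t ⟨by linarith [ht.1, hτpos], ht.2⟩, hϖ1 τ ⟨hτpos.le, hτσ⟩]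
    have h4 := hψ4' t ht.1
    rw [hΨeq t (by linarith [hτpos, ht.1]), hΨeq τ hτpos.le] at h4
    linarith [h4]
  have hint3 : ∀ t ∈ Icc (Λτ - ρ) (Λτ - ρ + τ), ∫ s in (0:ℝ)..t, q s = ϖ t := by
    intro t ht
    rw [← intervalIntegral.integral_add_adjacent_intervals (qInt 0 (Λτ - ρ)) (qInt _ t)]
    rw [hint2 _ ⟨hτσ, le_refl _⟩]
    rw [intCongrIco ht.1 (fun s hs => hE3 s hs.1 (lt_of_lt_of_le hs.2 ht.2))]
    rw [intervalIntegral.integral_const]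
    rw [hϖ1 (Λτ - ρ) ⟨hσ0, le_refl _⟩, hψΛ]
    rw [hϖ2 t ⟨ht.1, by linarith [ht.2, hτρ]⟩]
    rw [hx1 (t - (Λτ - ρ)) ⟨by linarith [ht.1], by linarith [ht.2]⟩]
    simp
    ring
  have hint4 : ∀ t ∈ Icc (Λτ - ρ + τ) Λτ, ∫ s in (0:ℝ)..t, q s = ϖ t := by
    intro t ht
    rw [← intervalIntegral.integral_add_adjacent_intervals (qInt 0 (Λτ - ρ + τ)) (qInt _ t)]
    rw [hint3 _ ⟨by linarith [hτpos], le_refl _⟩]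
    rw [intCongrIco ht.1 (fun s hs => hE4 s hs.1 (lt_of_lt_of_le hs.2 ht.2))]
    rw [hϖ2 (Λτ - ρ + τ) ⟨by linarith [hτpos], by linarith [hτρ]⟩]
    rw [hϖ2 t ⟨by linarith [ht.1, hτpos], ht.2⟩]
    have e1 : Λτ - ρ + τ - (Λτ - ρ) = τ := by ring
    rw [e1]
    rw [intervalIntegral.integral_neg]
    have hcv : ∫ s in (Λτ - ρ + τ)..t, xτ (s - τ - (Λτ - ρ)) =
        ∫ u in (0:ℝ)..(t - (Λτ - ρ) - τ), xτ u := by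
      rw [intervalIntegral.integral_congr (g := fun s => xτ (s - (τ + (Λτ - ρ))))
        (fun s _ => by norm_num; ring_nf)]
      rw [intervalIntegral.integral_comp_sub_right (fun u => xτ u) (τ + (Λτ - ρ))]
      congr 1 <;> ring
    rw [hcv]
    have hd := hxdiff τ (t - (Λτ - ρ)) hτpos.le (by linarith [ht.1, hτpos])
    have hcv2 : ∫ s in τ..(t - (Λτ - ρ)), xτ (s - τ) =
        ∫ u in (0:ℝ)..(t - (Λτ - ρ) - τ), xτ u := by
      rw [intervalIntegral.integral_comp_sub_right (fun u => xτ u) τ]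
      congr 1
      ring
    rw [hcv2] at hd
    linarith [hd]
  have honeper : ∀ t ∈ Icc (0:ℝ) Λτ, ∫ s in (0:ℝ)..t, q s = ϖ t := by
    intro t ht
    rcases le_or_gt t τ with h | h
    · exact hϖτint t ⟨ht.1, h⟩
    rcases le_or_gt t (Λτ - ρ) with h2 | h2
    · exact hint2 t ⟨h.le, h2⟩
    rcases le_or_gt t (Λτ - ρ + τ) with h3 | h3
    · exact hint3 t ⟨h2.le, h3⟩
    · exact hint4 t ⟨h3.le, ht.2⟩
  have hqL : ∫ s in (0:ℝ)..Λτ, q s = 0 := by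
    rw [honeper Λτ ⟨hΛpos.le, le_refl _⟩, hϖΛ]
  have hglobal : ∀ t : ℝ, ϖ t = ϖ 0 + ∫ s in (0:ℝ)..t, q s := by
    intro t
    rw [hϖ0, zero_add]
    have h1 : ∫ s in (0:ℝ)..t, q s =
        (∫ s in (0:ℝ)..(rr t), q s) + ∫ s in (rr t)..t, q s :=
      (intervalIntegral.integral_add_adjacent_intervals (qInt _ _) (qInt _ _)).symm
    have h2 : ∫ s in (rr t)..t, q s = 0 := by
      have ht' : t = rr t + (⌊t / Λτ⌋ : ℤ) • Λτ := by
        simp only [hrrdef, hnfldef, zsmul_eq_mul]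
        ring
      calc ∫ s in (rr t)..t, q s
          = ∫ s in (rr t)..(rr t + (⌊t / Λτ⌋ : ℤ) • Λτ), q s := by rw [← ht']
        _ = (⌊t / Λτ⌋ : ℤ) • ∫ s in (rr t)..(rr t + Λτ), q s :=
            hq_per.intervalIntegral_add_zsmul_eq _ _ (fun a b => qInt a b)
        _ = (⌊t / Λτ⌋ : ℤ) • ∫ s in (0:ℝ)..((0:ℝ) + Λτ), q s := by
            rw [hq_per.intervalIntegral_add_eq (rr t) 0]
        _ = 0 := by rw [zero_add, hqL]; simp
    rw [h1, h2, add_zero, honeper (rr t) ⟨hrr0 t, (hrrL t).le⟩, hϖrr t]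
  -- zero set characterization
  have hzeroiff : ∀ t : ℝ, ϖ t = 0 ↔ ∃ n : ℤ, t = n * Λτ := by
    intro t
    constructor
    · intro h0
      refine ⟨⌊t / Λτ⌋, ?_⟩
      have h1 : ϖ (rr t) = 0 := by rw [hϖrr t, h0]
      have h2 : rr t = 0 := by
        by_contra hne
        have hpos : 0 < rr t := lt_of_le_of_ne (hrr0 t) (Ne.symm hne)
        exact absurd h1 (ne_of_gt (hϖpos _ hpos (hrrL t)))
      have h3 : t - (⌊t / Λτ⌋ : ℝ) * Λτ = 0 := by
        simpa [hrrdef, hnfldef] using h2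
      linarith
    · rintro ⟨n, rfl⟩
      have h := hper.sub_int_mul_eq (x := (n:ℝ) * Λτ) n
      rw [sub_self] at h
      rw [← h, hϖ0]
  -- oscillation
  have hosc : AlphaOscillating Λτ ϖ := by
    refine ⟨0, fun a b _ hab hne => ?_⟩
    by_contra hgt
    push_neg at hgt
    set n : ℤ := ⌊a / Λτ⌋ + 1 with hndef
    have h1 : a < (n:ℝ) * Λτ := by
      have hf := (div_lt_iff₀ hΛpos).mp (Int.lt_floor_add_one (a / Λτ))
      rw [hndef]
      push_cast
      linarith
    have h2 : (n:ℝ) * Λτ ≤ a + Λτ := by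
      have hf := (le_div_iff₀ hΛpos).mp (Int.floor_le (a / Λτ))
      rw [hndef]
      push_cast
      linarith
    refine hne _ ⟨h1, by linarith⟩ ?_
    exact (hzeroiff _).mpr ⟨n, rfl⟩
  refine ⟨?_, ?_, hϖcont, hϖnonneg, hzeroiff,
    ⟨p, τd, mp, mτd, hp_abs, hτd_le, hlub, htend, fun t => hglobal t⟩, hosc⟩
  · rw [hψΛ, hx0 0 (le_refl 0)]
  · rw [hxρ, hψ0]

end
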